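/- Let P, Q ⊆ ℝⁿ be two polytopes with P ∩ Q nonempty. The map (F,G) ↦ F ∩ G is a bijection from {(F,G) ∈ L(P) × L(Q) : relint(F) ∩ relint(G) ≠ ∅} onto the set of nonempty faces of the polytope P ∩ Q. Moreover, for any such pair, N_{P∩Q}(F∩G) = cone(N_P(F) ∪ N_Q(G)). -/

import Mathlib

open scoped BigOperators

noncomputable section

/-- Vectors in `ℝⁿ`. -/
abbrev Vec (n : ℕ) := Fin n → ℝ

/-- The standard scalar product on `ℝⁿ`. -/
def dot {n : ℕ} (x y : Vec n) : ℝ := ∑ i, x i * y i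

/-- A polytope is the convex hull of a finite set of points. -/
def IsPolytope {n : ℕ} (P : Set (Vec n)) : Prop :=
  ∃ S : Finset (Vec n), P = convexHull ℝ (S : Set (Vec n))

/-- A face of `P`: either `P` itself (take `c = 0`) or the subset of `P` where some linear
functional attains its maximum over `P`. -/
def IsFace {n : ℕ} (P F : Set (Vec n)) : Prop :=
  ∃ c : Vec n, F = {x ∈ P | ∀ y ∈ P, dot c y ≤ dot c x}

/-- Dimension of a subset of `ℝⁿ`: the rank of the direction of its affine span. -/
noncomputable def sdim {n : ℕ} (A : Set (Vec n)) : ℕ :=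
  Module.finrank ℝ (affineSpan ℝ A).direction

/-- The normal cone of a face `F` of `P`. -/
def normalCone {n : ℕ} (P F : Set (Vec n)) : Set (Vec n) :=
  {c | F ⊆ {x ∈ P | ∀ y ∈ P, dot c y ≤ dot c x}}

/-- `coneOf X`: nonnegative linear combinations of finitely many elements of `X`. -/
def coneOf {n : ℕ} (X : Set (Vec n)) : Set (Vec n) :=
  {v | ∃ (k : ℕ) (x : Fin k → Vec n) (l : Fin k → ℝ),
      (∀ i, x i ∈ X) ∧ (∀ i, 0 ≤ l i) ∧ v = ∑ i, l i • x i}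

/-- The reflection `ρ_z P = 2z - P` of `P` with respect to `z`. -/
def reflP {n : ℕ} (z : Vec n) (P : Set (Vec n)) : Set (Vec n) :=
  (fun x => (2 : ℝ) • z - x) '' P

/-- An edge is a 1-dimensional face. -/
def IsEdge {n : ℕ} (P E : Set (Vec n)) : Prop := IsFace P E ∧ sdim E = 1

/-- `(P, v)` is oriented if `v` is not perpendicular to any edge of `P`. -/
def Oriented {n : ℕ} (P : Set (Vec n)) (v : Vec n) : Prop :=
  ∀ E, IsEdge P E → ∀ d ∈ (affineSpan ℝ E).direction, d ≠ 0 → dot d v ≠ 0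

/-- `(P, v)` is positively oriented if `(P ∩ ρ_z P, v)` is oriented for every `z ∈ P`. -/
def PosOriented {n : ℕ} (P : Set (Vec n)) (v : Vec n) : Prop :=
  ∀ z ∈ P, Oriented (P ∩ reflP z P) v

/-- `x` is the minimizer of `⟨-, v⟩` on `P`. -/
def IsBotOf {n : ℕ} (P : Set (Vec n)) (v x : Vec n) : Prop :=
  x ∈ P ∧ ∀ y ∈ P, dot v x ≤ dot v y

/-- `x` is the maximizer of `⟨-, v⟩` on `P`. -/
def IsTopOf {n : ℕ} (P : Set (Vec n)) (v x : Vec n) : Prop :=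
  x ∈ P ∧ ∀ y ∈ P, dot v y ≤ dot v x

/-- `(P, v)` is quasi-oriented if `⟨-, v⟩` has a unique minimizer and a unique maximizer on `P`. -/
def QuasiOriented {n : ℕ} (P : Set (Vec n)) (v : Vec n) : Prop :=
  (∃! x, IsBotOf P v x) ∧ (∃! x, IsTopOf P v x)

/-- `(P, v)` is quasi-positively oriented if `(P ∩ ρ_z P, v)` is quasi-oriented for all `z ∈ P`. -/
def QuasiPosOriented {n : ℕ} (P : Set (Vec n)) (v : Vec n) : Prop :=
  ∀ z ∈ P, QuasiOriented (P ∩ reflP z P) v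

/-- The polytope `P^φ = π^φ(P × P) ⊆ ℝ^{n+1}`, where `π^φ(x,y) = ((x+y)/2, ⟨x - y, v⟩)`. -/
def Pphi {n : ℕ} (P : Set (Vec n)) (v : Vec n) : Set (Vec (n + 1)) :=
  {w | ∃ x ∈ P, ∃ y ∈ P, w = Fin.snoc ((1 / 2 : ℝ) • (x + y)) (dot (x - y) v)}

/-- The pair of faces `(F, G)` belongs to `F^φ`: there are no `x ∈ F`, `y ∈ G`, `λ > 0` with
`(π(x,y), φ(x,y) - λ) ∈ P^φ`. -/
def InFphi {n : ℕ} (P : Set (Vec n)) (v : Vec n) (F G : Set (Vec n)) : Prop :=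
  ¬ ∃ x ∈ F, ∃ y ∈ G, ∃ lam : ℝ, 0 < lam ∧
      (Fin.snoc ((1 / 2 : ℝ) • (x + y)) (dot (x - y) v - lam) : Vec (n + 1)) ∈ Pphi P v

/-- The set `(A + B)/2`. -/
def avgSet {n : ℕ} (A B : Set (Vec n)) : Set (Vec n) :=
  {z | ∃ x ∈ A, ∃ y ∈ B, z = (1 / 2 : ℝ) • (x + y)}

/-- The coherent subdivision `π(F^φ)` is tight. -/
def TightSub {n : ℕ} (P : Set (Vec n)) (v : Vec n) : Prop :=
  ∀ F G : Set (Vec n), IsFace P F → IsFace P G → F.Nonempty → G.Nonempty →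
    InFphi P v F G → sdim F + sdim G = sdim (avgSet F G)

/-- `d` is a direction of an edge of `P ∩ ρ_z P` for some `z ∈ P`; the hyperplanes of the
fundamental hyperplane arrangement `H_P` are the orthogonal complements of such directions. -/
def EdgeDir {n : ℕ} (P : Set (Vec n)) (d : Vec n) : Prop :=
  d ≠ 0 ∧ ∃ z ∈ P, ∃ E, IsEdge (P ∩ reflP z P) E ∧ d ∈ (affineSpan ℝ E).direction

/-- The cone `cone(-N_P(F) ∪ N_P(G))`. -/
def diagCone {n : ℕ} (P F G : Set (Vec n)) : Set (Vec n) :=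
  coneOf ((Neg.neg '' normalCone P F) ∪ normalCone P G)


namespace Dot

variable {n : ℕ}

lemma comm (x y : Vec n) : dot x y = dot y x := by
  unfold dot; exact Finset.sum_congr rfl fun i _ => mul_comm _ _

lemma add_left (a b x : Vec n) : dot (a + b) x = dot a x + dot b x := by
  unfold dot; rw [← Finset.sum_add_distrib]; exact Finset.sum_congr rfl fun i _ => by
    simp [add_mul]

lemma smul_left (r : ℝ) (a x : Vec n) : dot (r • a) x = r * dot a x := by
  unfold dot; rw [Finset.mul_sum]; exact Finset.sum_congr rfl fun i _ => by
    simp [mul_assoc]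

lemma neg_left (a x : Vec n) : dot (-a) x = -dot a x := by
  unfold dot; rw [← Finset.sum_neg_distrib]; exact Finset.sum_congr rfl fun i _ => by simp

lemma sub_left (a b x : Vec n) : dot (a - b) x = dot a x - dot b x := by
  rw [sub_eq_add_neg, add_left, neg_left, sub_eq_add_neg]

lemma zero_left (x : Vec n) : dot 0 x = 0 := by unfold dot; simp

lemma add_right (x a b : Vec n) : dot x (a + b) = dot x a + dot x b := by
  rw [comm, add_left, comm a, comm b]

lemma smul_right (r : ℝ) (x a : Vec n) : dot x (r • a) = r * dot x a := by
  rw [comm, smul_left, comm]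

lemma sub_right (x a b : Vec n) : dot x (a - b) = dot x a - dot x b := by
  rw [comm, sub_left, comm a, comm b]

lemma zero_right (x : Vec n) : dot x 0 = 0 := by rw [comm, zero_left]

lemma sum_left {ι : Type*} (s : Finset ι) (f : ι → Vec n) (x : Vec n) :
    dot (∑ i ∈ s, f i) x = ∑ i ∈ s, dot (f i) x := by
  classical
  induction s using Finset.induction with
  | empty => simp [zero_left]
  | insert _ _ h ih => rw [Finset.sum_insert h, add_left, ih, Finset.sum_insert h]

lemma sum_right {ι : Type*} (s : Finset ι) (f : ι → Vec n) (x : Vec n) :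
    dot x (∑ i ∈ s, f i) = ∑ i ∈ s, dot x (f i) := by
  rw [comm, sum_left]; exact Finset.sum_congr rfl fun i _ => comm _ _

lemma isLinearMap (c : Vec n) : IsLinearMap ℝ (fun x => dot c x) := by
  constructor
  · intro x y; exact add_right c x y
  · intro r x; exact smul_right r c x

lemma continuous (c : Vec n) : Continuous (fun x : Vec n => dot c x) := by
  unfold dot
  exact continuous_finset_sum _ fun i _ => (continuous_const.mul (continuous_apply i))

/-- Represent any linear functional as a `dot`. -/
lemma of_linearMap (g : Vec n →ₗ[ℝ] ℝ) (y : Vec n) :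
    dot (fun i => g (Pi.single i 1)) y = g y := by
  have hsingle : ∀ i : Fin n, (y i) • (Pi.single i 1 : Vec n) = Pi.single i (y i) := by
    intro i
    rw [← Pi.single_smul]
    norm_num
  calc dot (fun i => g (Pi.single i 1)) y = ∑ i, y i * g (Pi.single i 1 : Vec n) := by
        unfold dot; exact Finset.sum_congr rfl fun i _ => mul_comm _ _
    _ = ∑ i, g ((y i) • (Pi.single i 1 : Vec n)) := by
        refine Finset.sum_congr rfl fun i _ => ?_
        rw [map_smul, smul_eq_mul]
    _ = g y := by
        rw [← map_sum]
        congr 1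
        conv_rhs => rw [← Finset.univ_sum_single y]
        exact Finset.sum_congr rfl fun i _ => hsingle i

end Dot

section FaceBasics

variable {n : ℕ} {P F : Set (Vec n)}

lemma isFace_self (P : Set (Vec n)) : IsFace P P := by
  refine ⟨0, ?_⟩
  ext x
  simp [Dot.zero_left]

lemma IsFace.subset (h : IsFace P F) : F ⊆ P := by
  obtain ⟨c, rfl⟩ := h; exact Set.sep_subset _ _

lemma IsFace.convex (h : IsFace P F) (hP : Convex ℝ P) : Convex ℝ F := by
  obtain ⟨c, rfl⟩ := h
  intro x hx y hy a b ha hb hab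
  refine ⟨hP hx.1 hy.1 ha hb hab, fun w hw => ?_⟩
  have h1 : a * dot c w ≤ a * dot c x := mul_le_mul_of_nonneg_left (hx.2 w hw) ha
  have h2 : b * dot c w ≤ b * dot c y := mul_le_mul_of_nonneg_left (hy.2 w hw) hb
  have : dot c (a • x + b • y) = a * dot c x + b * dot c y := by
    rw [Dot.add_right, Dot.smul_right, Dot.smul_right]
  rw [this]
  have hw2 : dot c w = a * dot c w + b * dot c w := by rw [← add_mul, hab, one_mul]
  linarith

lemma IsFace.isClosed (h : IsFace P F) (hP : IsClosed P) : IsClosed F := by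
  obtain ⟨c, rfl⟩ := h
  have : {x ∈ P | ∀ y ∈ P, dot c y ≤ dot c x} = P ∩ ⋂ y ∈ P, {x | dot c y ≤ dot c x} := by
    ext x; simp [Set.mem_iInter]
  rw [this]
  refine hP.inter (isClosed_biInter fun y _ => ?_)
  exact isClosed_le continuous_const (Dot.continuous c)

lemma IsPolytope.convex (h : IsPolytope P) : Convex ℝ P := by
  obtain ⟨S, rfl⟩ := h; exact convex_convexHull ℝ _

lemma IsPolytope.isCompact (h : IsPolytope P) : IsCompact P := by
  obtain ⟨S, rfl⟩ := h; exact S.finite_toSet.isCompact_convexHull (𝕜 := ℝ)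

lemma IsPolytope.isClosed (h : IsPolytope P) : IsClosed P := h.isCompact.isClosed

lemma dot_le_on_hull {S : Finset (Vec n)} {v : Vec n} {M : ℝ}
    (h : ∀ s ∈ S, dot v s ≤ M) : ∀ y ∈ convexHull ℝ (S : Set (Vec n)), dot v y ≤ M := by
  intro y hy
  have : convexHull ℝ (S : Set (Vec n)) ⊆ {y | dot v y ≤ M} :=
    convexHull_min (fun s hs => h s hs) (convex_halfSpace_le (Dot.isLinearMap v) M)
  exact this hy

/-- intersection of faces of `P` and `Q` is a face of `P ∩ Q`, with explicit functional. -/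
lemma face_inter {P Q F G : Set (Vec n)} (hF : IsFace P F) (hG : IsFace Q G)
    (hne : (F ∩ G).Nonempty) :
    ∃ c, F ∩ G = {x ∈ P ∩ Q | ∀ y ∈ P ∩ Q, dot c y ≤ dot c x} := by
  obtain ⟨c, rfl⟩ := hF
  obtain ⟨d, rfl⟩ := hG
  obtain ⟨w, hwF, hwG⟩ := hne
  refine ⟨c + d, ?_⟩
  ext x
  constructor
  · rintro ⟨⟨hxP, hxc⟩, hxQ, hxd⟩
    refine ⟨⟨hxP, hxQ⟩, fun y hy => ?_⟩
    rw [Dot.add_left, Dot.add_left]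
    exact add_le_add (hxc y hy.1) (hxd y hy.2)
  · rintro ⟨⟨hxP, hxQ⟩, hx⟩
    have h1 : dot c x ≤ dot c w := hwF.2 x hxP
    have h2 : dot d x ≤ dot d w := hwG.2 x hxQ
    have h3 : dot (c + d) w ≤ dot (c + d) x := hx w ⟨hwF.1, hwG.1⟩
    rw [Dot.add_left, Dot.add_left] at h3
    have hcx : dot c x = dot c w := by linarith
    have hdx : dot d x = dot d w := by linarith
    exact ⟨⟨hxP, fun y hy => hcx ▸ hwF.2 y hy⟩, ⟨hxQ, fun y hy => hdx ▸ hwG.2 y hy⟩⟩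

end FaceBasics

section Bridge

variable {n : ℕ}

/-- Bridge: the intrinsic interior of `A` expressed via the interior of a convex set in the
direction submodule. -/
lemma relint_bridge (A : Set (Vec n)) (p : Vec n) (hp : p ∈ affineSpan ℝ A) :
    intrinsicInterior ℝ A =
      (fun w : (affineSpan ℝ A).direction => p - (w : Vec n)) ''
        interior {w : (affineSpan ℝ A).direction | p - (w : Vec n) ∈ A} := by
  haveI : Nonempty (affineSpan ℝ A) := ⟨⟨p, hp⟩⟩
  set e : (affineSpan ℝ A) ≃ᵃⁱ[ℝ] (affineSpan ℝ A).direction :=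
    AffineIsometryEquiv.constVSub ℝ (⟨p, hp⟩ : affineSpan ℝ A) with he
  have hcoe : ∀ x : affineSpan ℝ A, ((e x : (affineSpan ℝ A).direction) : Vec n) = p - (x : Vec n) := by
    intro x; rfl
  have hsymm : ∀ w : (affineSpan ℝ A).direction,
      ((e.symm w : affineSpan ℝ A) : Vec n) = p - (w : Vec n) := by
    intro w
    have := hcoe (e.symm w)
    rw [e.apply_symm_apply] at this
    rw [this]; abel
  have hB : e '' ((↑) ⁻¹' A : Set (affineSpan ℝ A)) =
      {w : (affineSpan ℝ A).direction | p - (w : Vec n) ∈ A} := by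
    ext w
    constructor
    · rintro ⟨x, hx, rfl⟩
      simpa [hcoe x] using hx
    · intro hw
      refine ⟨e.symm w, ?_, e.apply_symm_apply w⟩
      simpa [hsymm w] using hw
  have hco : (⇑e : (affineSpan ℝ A) → (affineSpan ℝ A).direction) = ⇑e.toHomeomorph := rfl
  rw [intrinsicInterior]
  rw [← hB, hco, ← e.toHomeomorph.image_interior]
  rw [Set.image_image]
  refine Set.image_congr fun x _ => ?_
  rw [show ((e.toHomeomorph x : (affineSpan ℝ A).direction) : Vec n) = p - (x : Vec n) from hcoe x]
  abel

/-- The set `B` in the bridge is convex when `A` is. -/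
lemma bridge_convex {A : Set (Vec n)} (hA : Convex ℝ A) (p : Vec n) :
    Convex ℝ {w : (affineSpan ℝ A).direction | p - (w : Vec n) ∈ A} := by
  intro w₁ h₁ w₂ h₂ a b ha hb hab
  have hcoe : ((a • w₁ + b • w₂ : (affineSpan ℝ A).direction) : Vec n)
      = a • (w₁ : Vec n) + b • (w₂ : Vec n) := by push_cast; ring_nf
  show p - ((a • w₁ + b • w₂ : (affineSpan ℝ A).direction) : Vec n) ∈ A
  rw [hcoe]
  have : p - (a • (w₁ : Vec n) + b • (w₂ : Vec n))
      = a • (p - (w₁ : Vec n)) + b • (p - (w₂ : Vec n)) := by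
    have h2 : a • (p - (w₁ : Vec n)) + b • (p - (w₂ : Vec n))
        = (a + b) • p - (a • (w₁ : Vec n) + b • (w₂ : Vec n)) := by
      rw [smul_sub, smul_sub, add_smul]; abel
    rw [h2, hab, one_smul]
  rw [this]
  exact hA h₁ h₂ ha hb hab

/-- L4: from a relative interior point one can move slightly beyond, away from any point. -/
lemma exists_extension {A : Set (Vec n)} {z x : Vec n}
    (hz : z ∈ intrinsicInterior ℝ A) (hx : x ∈ A) :
    ∃ ε : ℝ, 0 < ε ∧ z + ε • (z - x) ∈ A := by
  rw [relint_bridge A x (subset_affineSpan ℝ A hx)] at hz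
  obtain ⟨w₀, hw₀, rfl⟩ := hz
  set B := {w : (affineSpan ℝ A).direction | x - (w : Vec n) ∈ A} with hBdef
  have hf : Continuous fun t : ℝ => (1 + t) • w₀ :=
    (continuous_const.add continuous_id).smul continuous_const
  have hop : IsOpen ((fun t : ℝ => (1 + t) • w₀) ⁻¹' interior B) :=
    hf.isOpen_preimage _ isOpen_interior
  have h0 : (0 : ℝ) ∈ (fun t : ℝ => (1 + t) • w₀) ⁻¹' interior B := by
    simp only [Set.mem_preimage]
    norm_num
    exact hw₀
  obtain ⟨δ, hδ, hball⟩ := Metric.isOpen_iff.1 hop 0 h0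
  refine ⟨δ / 2, by positivity, ?_⟩
  have hmem : (1 + δ / 2) • w₀ ∈ interior B := by
    apply hball
    simp only [Metric.mem_ball, dist_zero_right, Real.norm_eq_abs]
    rw [abs_of_pos (by positivity)]
    linarith
  have hmemB : ((1 + δ / 2) • w₀) ∈ B := interior_subset hmem
  have hmem2 : x - (((1 + δ / 2) • w₀ : (affineSpan ℝ A).direction) : Vec n) ∈ A := hmemB
  have hco : (((1 + δ / 2) • w₀ : (affineSpan ℝ A).direction) : Vec n)
      = (1 + δ / 2) • (w₀ : Vec n) := by push_cast; ring_nf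
  rw [hco] at hmem2
  have key : x - (w₀ : Vec n) + (δ / 2) • (x - (w₀ : Vec n) - x)
      = x - (1 + δ / 2) • (w₀ : Vec n) := by module
  rw [key]
  exact hmem2

/-- L4': the average of a relative interior point and a member stays in the relative interior. -/
lemma midpoint_mem_relint {A : Set (Vec n)} (hA : Convex ℝ A) {z x : Vec n}
    (hz : z ∈ intrinsicInterior ℝ A) (hx : x ∈ A) :
    (1 / 2 : ℝ) • (z + x) ∈ intrinsicInterior ℝ A := by
  have hxs := subset_affineSpan ℝ A hx
  rw [relint_bridge A x hxs] at hz ⊢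
  obtain ⟨w₀, hw₀, rfl⟩ := hz
  set B := {w : (affineSpan ℝ A).direction | x - (w : Vec n) ∈ A} with hBdef
  have hBc : Convex ℝ B := bridge_convex hA x
  have h0B : (0 : (affineSpan ℝ A).direction) ∈ B := by
    show x - ((0 : (affineSpan ℝ A).direction) : Vec n) ∈ A
    simpa using hx
  have hhalf : (1 / 2 : ℝ) • w₀ ∈ interior B := by
    have hseg : openSegment ℝ w₀ (0 : (affineSpan ℝ A).direction) ⊆ interior B :=
      hBc.openSegment_interior_self_subset_interior hw₀ h0B
    apply hseg
    exact ⟨1 / 2, 1 / 2, by norm_num, by norm_num, by norm_num, by rw [smul_zero, add_zero]⟩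
  refine ⟨(1 / 2 : ℝ) • w₀, hhalf, ?_⟩
  show x - (((1 / 2 : ℝ) • w₀ : (affineSpan ℝ A).direction) : Vec n)
      = (1 / 2 : ℝ) • ((x - (w₀ : Vec n)) + x)
  have hco : (((1 / 2 : ℝ) • w₀ : (affineSpan ℝ A).direction) : Vec n)
      = (1 / 2 : ℝ) • (w₀ : Vec n) := by push_cast; ring_nf
  rw [hco]
  module

/-- M3: supporting functional at a point of `A` outside the relative interior. -/
lemma exists_support {A : Set (Vec n)} (hA : Convex ℝ A) {z : Vec n}
    (hzA : z ∈ A) (hz : z ∉ intrinsicInterior ℝ A) :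
    ∃ c y₀, y₀ ∈ A ∧ (∀ y ∈ A, dot c y ≤ dot c z) ∧ dot c y₀ < dot c z := by
  have hzs := subset_affineSpan ℝ A hzA
  rw [relint_bridge A z hzs] at hz
  set D := (affineSpan ℝ A).direction with hDdef
  set B := {w : D | z - (w : Vec n) ∈ A} with hBdef
  have hBc : Convex ℝ B := bridge_convex hA z
  have hne : (interior B).Nonempty := by
    have h1 : (intrinsicInterior ℝ A).Nonempty := Set.Nonempty.intrinsicInterior hA ⟨z, hzA⟩
    rw [relint_bridge A z hzs] at h1
    exact h1.of_image
  obtain ⟨w₀, hw₀⟩ := hne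
  have h0 : (0 : D) ∉ interior B := by
    intro h
    exact hz ⟨0, h, by simp⟩
  obtain ⟨f, hf⟩ := geometric_hahn_banach_open_point hBc.interior isOpen_interior h0
  have hf0 : ∀ a ∈ interior B, f a < 0 := by simpa using hf
  -- every point of B satisfies f ≤ 0, by a limit argument
  have hBf : ∀ b ∈ B, f b ≤ 0 := by
    intro b hb
    have hseg : ∀ t ∈ Set.Ioo (0:ℝ) 1, f ((1 - t) • b + t • w₀) < 0 := by
      intro t ht
      refine hf0 _ ?_
      have := hBc.openSegment_self_interior_subset_interior hb hw₀
      exact this ⟨1 - t, t, by linarith [ht.2], ht.1, by ring, rfl⟩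
    have hcont : Continuous fun t : ℝ => f ((1 - t) • b + t • w₀) := by
      apply f.continuous.comp
      exact ((continuous_const.sub continuous_id).smul continuous_const).add
        (continuous_id.smul continuous_const)
    have htend : Filter.Tendsto (fun t : ℝ => f ((1 - t) • b + t • w₀))
        (nhdsWithin 0 (Set.Ioi 0)) (nhds (f b)) := by
      have := hcont.tendsto 0
      simp only [sub_zero, one_smul, zero_smul, add_zero] at this
      exact this.mono_left nhdsWithin_le_nhds
    refine le_of_tendsto htend ?_
    filter_upwards [Ioo_mem_nhdsGT_of_mem (Set.mem_Ico.2 ⟨le_refl (0:ℝ), zero_lt_one⟩)] with t ht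
    exact (hseg t ht).le
  -- extend f to all of Vec n
  obtain ⟨g, hg⟩ := LinearMap.exists_extend (f : D →ₗ[ℝ] ℝ)
  have hgf : ∀ w : D, g (w : Vec n) = f w := by
    intro w
    have := congrArg (fun h => h w) hg
    simpa using this
  set c : Vec n := -(fun i => g (Pi.single i 1)) with hc
  have hdotg : ∀ y : Vec n, dot c y = -(g y) := by
    intro y
    rw [hc, Dot.neg_left, Dot.of_linearMap]
  have hw₀B : w₀ ∈ B := interior_subset hw₀
  refine ⟨c, z - (w₀ : Vec n), hw₀B, ?_, ?_⟩
  · intro y hy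
    have hys := subset_affineSpan ℝ A hy
    set wy : D := ⟨z - y, AffineSubspace.vsub_mem_direction hzs hys⟩ with hwy
    have hywy : y = z - (wy : Vec n) := by simp [hwy]
    have hwyB : wy ∈ B := by rw [hBdef]; simp only [Set.mem_setOf_eq, ← hywy]; exact hy
    have := hBf wy hwyB
    rw [hdotg, hdotg, hywy, map_sub, hgf]
    linarith
  · have hfw₀ : f w₀ < 0 := hf0 w₀ hw₀
    rw [hdotg, hdotg, map_sub, hgf]
    linarith

end Bridge

section Combinatorics

open scoped Classical

variable {n : ℕ}

lemma dot_eq_of_relint {A F : Set (Vec n)} {c z x : Vec n}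
    (hz : z ∈ intrinsicInterior ℝ F) (hx : x ∈ F) (hFA : F ⊆ A)
    (hmax : ∀ y ∈ A, dot c y ≤ dot c z) : dot c x = dot c z := by
  obtain ⟨ε, hε, hmem⟩ := exists_extension hz hx
  have h1 : dot c (z + ε • (z - x)) ≤ dot c z := hmax _ (hFA hmem)
  rw [Dot.add_right, Dot.smul_right, Dot.sub_right] at h1
  have h2 : dot c x ≤ dot c z := hmax x (hFA hx)
  nlinarith

/-- M1: the face of `conv S` given by `c` is the hull of the maximizing vertices. -/
lemma face_eq_convexHull_filter (S : Finset (Vec n)) (hS : S.Nonempty) (c : Vec n) :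
    {x ∈ convexHull ℝ (S : Set (Vec n)) | ∀ y ∈ convexHull ℝ (S : Set (Vec n)), dot c y ≤ dot c x}
      = convexHull ℝ ((S.filter fun s => S.sup' hS (fun t => dot c t) ≤ dot c s : Finset (Vec n)) :
          Set (Vec n)) := by
  set M := S.sup' hS (fun t => dot c t) with hM
  set S₁ := S.filter fun s => M ≤ dot c s with hS₁
  have hSM : ∀ s ∈ S, dot c s ≤ M := fun s hs => Finset.le_sup' (fun t => dot c t) hs
  have hub : ∀ y ∈ convexHull ℝ (S : Set (Vec n)), dot c y ≤ M := dot_le_on_hull hSM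
  obtain ⟨s₀, hs₀S, hs₀⟩ := Finset.exists_mem_eq_sup' hS (fun t => dot c t)
  have hs₀conv : s₀ ∈ convexHull ℝ (S : Set (Vec n)) := subset_convexHull ℝ _ hs₀S
  have hface : {x ∈ convexHull ℝ (S : Set (Vec n)) |
      ∀ y ∈ convexHull ℝ (S : Set (Vec n)), dot c y ≤ dot c x}
      = {x ∈ convexHull ℝ (S : Set (Vec n)) | dot c x = M} := by
    ext x
    constructor
    · rintro ⟨hx, hmax⟩
      refine ⟨hx, le_antisymm (hub x hx) ?_⟩
      rw [hM, hs₀]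
      exact hmax s₀ hs₀conv
    · rintro ⟨hx, hxM⟩
      exact ⟨hx, fun y hy => by rw [hxM]; exact hub y hy⟩
  rw [hface]
  apply Set.Subset.antisymm
  · rintro x ⟨hx, hxM⟩
    rw [Finset.convexHull_eq] at hx
    obtain ⟨w, hw0, hw1, hcm⟩ := hx
    have hxsum : x = ∑ y ∈ S, w y • y := by
      rw [← hcm, Finset.centerMass_eq_of_sum_1 _ _ hw1]
      simp only [id]
    have hdotx : dot c x = ∑ y ∈ S, w y * dot c y := by
      rw [hxsum, Dot.sum_right]
      exact Finset.sum_congr rfl fun y _ => Dot.smul_right _ _ _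
    have hzero : ∑ y ∈ S, w y * (M - dot c y) = 0 := by
      simp only [mul_sub]
      rw [Finset.sum_sub_distrib, ← Finset.sum_mul, hw1, one_mul, ← hdotx, hxM, sub_self]
    have hterm : ∀ y ∈ S, 0 ≤ w y * (M - dot c y) :=
      fun y hy => mul_nonneg (hw0 y hy) (sub_nonneg.2 (hSM y hy))
    have hall := (Finset.sum_eq_zero_iff_of_nonneg hterm).1 hzero
    have hsupp : ∀ y ∈ S, y ∉ S₁ → w y = 0 := by
      intro y hy hny
      have hlt : dot c y < M := by
        by_contra h
        exact hny (Finset.mem_filter.2 ⟨hy, not_lt.1 h⟩)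
      rcases mul_eq_zero.1 (hall y hy) with h | h
      · exact h
      · exact absurd h (by linarith)
    have hsub1 : S₁ ⊆ S := Finset.filter_subset _ S
    have hx1 : ∑ y ∈ S₁, w y = 1 := by
      rw [← hw1]
      exact Finset.sum_subset hsub1 (fun y hy hny => hsupp y hy hny)
    have hxS₁ : ∑ y ∈ S₁, w y • y = x := by
      rw [hxsum]
      exact Finset.sum_subset hsub1 (fun y hy hny => by rw [hsupp y hy hny, zero_smul])
    rw [Finset.convexHull_eq]
    refine ⟨w, fun y hy => hw0 y (hsub1 hy), hx1, ?_⟩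
    rw [Finset.centerMass_eq_of_sum_1 _ _ hx1]
    simp only [id]
    exact hxS₁
  · intro x hx
    have h1 : ∀ s ∈ S₁, dot c s = M := by
      intro s hs
      rw [hS₁, Finset.mem_filter] at hs
      exact le_antisymm (hSM s hs.1) hs.2
    have hsub : convexHull ℝ (S₁ : Set (Vec n)) ⊆ {y | dot c y = M} := by
      apply convexHull_min
      · intro s hs; exact h1 s hs
      · exact convex_hyperplane (Dot.isLinearMap c) M
    refine ⟨convexHull_mono (by exact_mod_cast Finset.filter_subset _ S) hx, hsub hx⟩

end Combinatorics

section Trans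

open scoped Classical

variable {n : ℕ}

/-- M2: a face of a face of a polytope is a face of the polytope. -/
lemma isFace_trans {S : Finset (Vec n)} {F F' : Set (Vec n)}
    (hF : IsFace (convexHull ℝ (S : Set (Vec n))) F) (hF' : IsFace F F') :
    IsFace (convexHull ℝ (S : Set (Vec n))) F' := by
  rcases S.eq_empty_or_nonempty with rfl | hS
  · obtain ⟨c, rfl⟩ := hF
    obtain ⟨f, rfl⟩ := hF'
    refine ⟨0, ?_⟩
    simp
  obtain ⟨c, rfl⟩ := hF
  obtain ⟨f, hF'eq⟩ := hF'
  set M := S.sup' hS (fun t => dot c t) with hM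
  set S₁ := S.filter fun s => M ≤ dot c s with hS₁def
  have hFc := face_eq_convexHull_filter S hS c
  have hS₁ne : S₁.Nonempty := by
    obtain ⟨s₀, hs₀S, hs₀⟩ := Finset.exists_mem_eq_sup' hS (fun t => dot c t)
    exact ⟨s₀, Finset.mem_filter.2 ⟨hs₀S, le_of_eq hs₀⟩⟩
  set M' := S₁.sup' hS₁ne (fun t => dot f t) with hM'
  set S₂ := S₁.filter fun s => M' ≤ dot f s with hS₂def
  have hF'c : F' = convexHull ℝ (S₂ : Set (Vec n)) := by
    rw [hF'eq, hFc]
    exact face_eq_convexHull_filter S₁ hS₁ne f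
  -- choose ε
  have hεex : ∃ ε : ℝ, 0 < ε ∧ ∀ s ∈ S, s ∉ S₁ → dot c s + ε * dot f s < M + ε * M' := by
    rcases (S \ S₁).eq_empty_or_nonempty with hSd | hSd
    · refine ⟨1, one_pos, fun s hs hns => absurd ?_ (by simp [hSd] : s ∉ S \ S₁)⟩
      exact Finset.mem_sdiff.2 ⟨hs, hns⟩
    · set δ := (S \ S₁).inf' hSd (fun s => M - dot c s) with hδdef
      have hδ : 0 < δ := by
        rw [hδdef, Finset.lt_inf'_iff]
        intro s hs
        rw [Finset.mem_sdiff, hS₁def, Finset.mem_filter] at hs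
        have : ¬ M ≤ dot c s := fun h => hs.2 ⟨hs.1, h⟩
        linarith [not_le.1 this]
      set Bq := (S \ S₁).sup' hSd (fun s => |dot f s - M'|) with hBq
      have hBq0 : 0 ≤ Bq := by
        obtain ⟨s, hs⟩ := hSd
        rw [hBq]
        exact le_trans (abs_nonneg (dot f s - M')) (Finset.le_sup' (fun s => |dot f s - M'|) hs)
      refine ⟨δ / (Bq + 1), by positivity, ?_⟩
      intro s hs hns
      have hsd : s ∈ S \ S₁ := Finset.mem_sdiff.2 ⟨hs, hns⟩
      have h1 : dot f s - M' ≤ Bq := by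
        rw [hBq]
        exact le_trans (le_abs_self _) (Finset.le_sup' (fun s => |dot f s - M'|) hsd)
      have h2 : δ ≤ M - dot c s := Finset.inf'_le _ hsd
      have h3 : δ / (Bq + 1) * Bq < δ := by
        rw [div_mul_eq_mul_div, div_lt_iff₀ (by linarith)]
        nlinarith
      have h4 : δ / (Bq + 1) * (dot f s - M') ≤ δ / (Bq + 1) * Bq :=
        mul_le_mul_of_nonneg_left h1 (by positivity)
      nlinarith
  obtain ⟨ε, hε, hkey⟩ := hεex
  refine ⟨c + ε • f, ?_⟩
  have hdot : ∀ x : Vec n, dot (c + ε • f) x = dot c x + ε * dot f x := by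
    intro x; rw [Dot.add_left, Dot.smul_left]
  have hS₁sub : S₁ ⊆ S := Finset.filter_subset _ _
  have hS₁M : ∀ s ∈ S₁, dot c s = M := by
    intro s hs
    rw [hS₁def, Finset.mem_filter] at hs
    exact le_antisymm (Finset.le_sup' _ hs.1) hs.2
  have hS₁M' : ∀ s ∈ S₁, dot f s ≤ M' := fun s hs => Finset.le_sup' _ hs
  obtain ⟨s₁, hs₁S₁, hs₁⟩ := Finset.exists_mem_eq_sup' hS₁ne (fun t => dot f t)
  have hsup : S.sup' hS (fun t => dot (c + ε • f) t) = M + ε * M' := by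
    apply le_antisymm
    · rw [Finset.sup'_le_iff]
      intro s hs
      rw [hdot]
      by_cases hmem : s ∈ S₁
      · have := hS₁M' s hmem
        rw [hS₁M s hmem]
        nlinarith
      · exact (hkey s hs hmem).le
    · have : dot (c + ε • f) s₁ = M + ε * M' := by
        rw [hdot, hS₁M s₁ hs₁S₁, ← hs₁]
      rw [← this]
      exact Finset.le_sup' _ (hS₁sub hs₁S₁)
  have hfilter : (S.filter fun s => S.sup' hS (fun t => dot (c + ε • f) t) ≤ dot (c + ε • f) s)
      = S₂ := by
    rw [hsup]
    ext s
    rw [Finset.mem_filter, hS₂def, Finset.mem_filter]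
    constructor
    · rintro ⟨hsS, hle⟩
      by_cases hmem : s ∈ S₁
      · refine ⟨hmem, ?_⟩
        rw [hdot, hS₁M s hmem] at hle
        nlinarith
      · exact absurd hle (not_le.2 (by rw [hdot]; exact hkey s hsS hmem))
    · rintro ⟨hsS₁, hle⟩
      refine ⟨hS₁sub hsS₁, ?_⟩
      rw [hdot, hS₁M s hsS₁]
      nlinarith
  rw [face_eq_convexHull_filter S hS (c + ε • f), hfilter, ← hF'c]

end Trans

section MinFace

open scoped Classical

variable {n : ℕ}

/-- M4: every point of a polytope is in the relative interior of some face. -/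
lemma exists_face_relint {S : Finset (Vec n)} {z : Vec n}
    (hz : z ∈ convexHull ℝ (S : Set (Vec n))) :
    ∃ F, IsFace (convexHull ℝ (S : Set (Vec n))) F ∧ z ∈ intrinsicInterior ℝ F := by
  set P := convexHull ℝ (S : Set (Vec n)) with hP
  have hS : S.Nonempty := by
    rcases S.eq_empty_or_nonempty with rfl | h
    · simp [hP] at hz
    · exact h
  set 𝒞 : Set (Set (Vec n)) := {F | IsFace P F ∧ z ∈ F} with h𝒞
  have h𝒞fin : 𝒞.Finite := by
    have himg : 𝒞 ⊆ (fun T : Finset (Vec n) => convexHull ℝ (T : Set (Vec n))) '' ↑S.powerset := by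
      rintro F ⟨⟨c, rfl⟩, _⟩
      refine ⟨S.filter fun s => S.sup' hS (fun t => dot c t) ≤ dot c s, ?_, ?_⟩
      · rw [Finset.mem_coe, Finset.mem_powerset]
        exact Finset.filter_subset _ _
      · exact (face_eq_convexHull_filter S hS c).symm
    exact Set.Finite.subset (Set.Finite.image _ (S.powerset.finite_toSet)) himg
  have h𝒞ne : 𝒞.Nonempty := ⟨P, isFace_self P, hz⟩
  obtain ⟨F₀, hF₀𝒞, hmin⟩ : ∃ F₀ ∈ 𝒞, ∀ a' ∈ 𝒞, id a' ≤ id F₀ → id F₀ = id a' := by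
    obtain ⟨F₀, hF₀, hm⟩ := h𝒞fin.exists_minimal h𝒞ne
    exact ⟨F₀, hF₀, fun a' ha' hle => le_antisymm (hm ha' hle) hle⟩
  obtain ⟨hF₀, hzF₀⟩ := hF₀𝒞
  -- F₀ is least among faces containing z
  have hleast : ∀ D ∈ 𝒞, F₀ ⊆ D := by
    rintro D ⟨hD, hzD⟩
    have hne : (F₀ ∩ D).Nonempty := ⟨z, hzF₀, hzD⟩
    obtain ⟨cc, hcc⟩ := face_inter hF₀ hD hne
    have hface : IsFace P (F₀ ∩ D) := ⟨cc, by rwa [Set.inter_self] at hcc⟩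
    have hmem : F₀ ∩ D ∈ 𝒞 := ⟨hface, hzF₀, hzD⟩
    have := hmin (F₀ ∩ D) hmem (Set.inter_subset_left)
    intro x hx
    rw [id, id] at this
    rw [this] at hx
    exact hx.2
  by_cases hri : z ∈ intrinsicInterior ℝ F₀
  · exact ⟨F₀, hF₀, hri⟩
  exfalso
  have hF₀conv : Convex ℝ F₀ := hF₀.convex (convex_convexHull ℝ _)
  obtain ⟨c, y₀, hy₀F₀, hcmax, hcstrict⟩ := exists_support hF₀conv hzF₀ hri
  set F' := {x ∈ F₀ | ∀ y ∈ F₀, dot c y ≤ dot c x} with hF'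
  have hF'P : IsFace P F' := isFace_trans hF₀ ⟨c, rfl⟩
  have hzF' : z ∈ F' := ⟨hzF₀, hcmax⟩
  have hsub := hleast F' ⟨hF'P, hzF'⟩
  have hy₀F' : y₀ ∈ F' := hsub hy₀F₀
  have := hy₀F'.2 z hzF₀
  linarith

end MinFace

section Farkas

open scoped Classical

variable {H : Type*} [NormedAddCommGroup H] [InnerProductSpace ℝ H]
variable {ι : Type*} [Fintype ι]

/-- Carathéodory-type reduction for conical combinations. -/
lemma cone_carath (a : ι → H) (N : ℕ) :
    ∀ l : ι → ℝ, (Finset.univ.filter fun i => l i ≠ 0).card ≤ N → (∀ i, 0 ≤ l i) →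
    ∃ l' : ι → ℝ, (∀ i, 0 ≤ l' i) ∧ (∑ i, l' i • a i = ∑ i, l i • a i) ∧
      LinearIndependent ℝ (fun i : (Finset.univ.filter fun i => l' i ≠ 0) => a ↑i) := by
  induction N with
  | zero =>
    intro l hcard hl
    refine ⟨l, hl, rfl, ?_⟩
    have hemp : (Finset.univ.filter fun i => l i ≠ 0) = ∅ :=
      Finset.card_eq_zero.1 (le_antisymm hcard (Nat.zero_le _))
    haveI : IsEmpty ((Finset.univ.filter fun i => l i ≠ 0) : Finset ι) := by
      rw [hemp]; simp; exact ⟨fun x => x.2⟩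
    exact linearIndependent_empty_type
  | succ N ih =>
    intro l hcard hl
    by_cases hLI : LinearIndependent ℝ (fun i : (Finset.univ.filter fun i => l i ≠ 0) => a ↑i)
    · exact ⟨l, hl, rfl, hLI⟩
    rw [Fintype.not_linearIndependent_iff] at hLI
    set s := (Finset.univ.filter fun i => l i ≠ 0) with hs
    have hexists : ∃ g : s → ℝ,
        (∑ i, g i • a ↑i = 0) ∧ ∃ i, 0 < g i := by
      obtain ⟨g, hgsum, i₀, hgi₀⟩ := hLI
      rcases lt_or_ge 0 (g i₀) with h | h
      · exact ⟨g, hgsum, i₀, h⟩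
      · refine ⟨-g, ?_, i₀, ?_⟩
        · have : ∑ i, (-g) i • a ↑i = -∑ i, g i • a ↑i := by
            simp [neg_smul, Finset.sum_neg_distrib]
          rw [this, hgsum, neg_zero]
        · rw [Pi.neg_apply, neg_pos]
          exact lt_of_le_of_ne h hgi₀
    clear hLI
    obtain ⟨g, hgsum, i₀, hgi₀⟩ := hexists
    set G : ι → ℝ := fun i => if h : i ∈ s then g ⟨i, h⟩ else 0 with hG
    have hG0 : ∀ i ∉ s, G i = 0 := fun i hi => dif_neg hi
    have hGg : ∀ (i) (h : i ∈ s), G i = g ⟨i, h⟩ := fun i h => dif_pos h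
    have hGsum : ∑ i, G i • a i = 0 := by
      have h1 : ∑ i ∈ s, G i • a i = ∑ i, G i • a i :=
        Finset.sum_subset (Finset.subset_univ s) (fun i _ hi => by rw [hG0 i hi, zero_smul])
      rw [← h1, ← Finset.sum_coe_sort s (fun i => G i • a i)]
      rw [← hgsum]
      exact Finset.sum_congr rfl fun i _ => by rw [hGg ↑i i.2, Subtype.coe_eta]
    set T := s.filter (fun i => 0 < G i) with hT
    have hi₀T : (↑i₀ : ι) ∈ T := by
      rw [hT, Finset.mem_filter]
      exact ⟨i₀.2, by rw [hGg ↑i₀ i₀.2, Subtype.coe_eta]; exact hgi₀⟩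
    have hTne : T.Nonempty := ⟨↑i₀, hi₀T⟩
    set τ := T.inf' hTne (fun i => l i / G i) with hτ
    have hτ0 : 0 ≤ τ := by
      rw [hτ, Finset.le_inf'_iff]
      intro i hi
      rw [hT, Finset.mem_filter] at hi
      exact div_nonneg (hl i) hi.2.le
    obtain ⟨i₁, hi₁T, hi₁⟩ := Finset.exists_mem_eq_inf' hTne (fun i => l i / G i)
    have hGi₁ : 0 < G i₁ := (Finset.mem_filter.1 hi₁T).2
    set l' : ι → ℝ := fun i => l i - τ * G i with hl'def
    have hl' : ∀ i, 0 ≤ l' i := by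
      intro i
      rcases lt_or_ge 0 (G i) with h | h
      · have hiT : i ∈ T := by
          rw [hT, Finset.mem_filter]
          refine ⟨?_, h⟩
          by_contra hmem
          rw [hG0 i hmem] at h; exact lt_irrefl 0 h
        have := Finset.inf'_le (fun i => l i / G i) hiT
        rw [← hτ] at this
        have := (le_div_iff₀ h).1 this
        simp only [hl'def]; linarith
      · have h1 : τ * G i ≤ 0 := mul_nonpos_iff.2 (Or.inl ⟨hτ0, h⟩)
        have := hl i
        simp only [hl'def]; linarith
    have hsum' : ∑ i, l' i • a i = ∑ i, l i • a i := by
      simp only [hl'def, sub_smul]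
      rw [Finset.sum_sub_distrib]
      have : ∑ i, (τ * G i) • a i = τ • ∑ i, G i • a i := by
        rw [Finset.smul_sum]
        exact Finset.sum_congr rfl fun i _ => by rw [mul_smul]
      rw [this, hGsum, smul_zero, sub_zero]
    have hl'i₁ : l' i₁ = 0 := by
      have hτ1 : τ = l i₁ / G i₁ := hi₁
      simp only [hl'def]
      rw [hτ1, div_mul_cancel₀ _ (ne_of_gt hGi₁), sub_self]
    have hsub : (Finset.univ.filter fun i => l' i ≠ 0) ⊆ s.erase i₁ := by
      intro i hi
      rw [Finset.mem_filter] at hi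
      rw [Finset.mem_erase]
      constructor
      · rintro rfl; exact hi.2 hl'i₁
      · by_contra hmem
        have hli : l i = 0 := by
          by_contra hli
          exact hmem (Finset.mem_filter.2 ⟨Finset.mem_univ i, hli⟩)
        have hGi : G i = 0 := hG0 i hmem
        exact hi.2 (by simp [hl'def, hli, hGi])
    have hi₁s : i₁ ∈ s := (Finset.mem_filter.1 hi₁T).1
    have hcard' : (Finset.univ.filter fun i => l' i ≠ 0).card ≤ N := by
      have h1 := Finset.card_le_card hsub
      rw [Finset.card_erase_of_mem hi₁s] at h1
      have h2 : s.card ≤ N + 1 := hcard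
      omega
    obtain ⟨l'', h1, h2, h3⟩ := ih l' hcard' hl'
    exact ⟨l'', h1, by rw [h2, hsum'], h3⟩

/-- A finitely generated cone is closed. -/
lemma cone_closed [FiniteDimensional ℝ H] (a : ι → H) :
    IsClosed {v : H | ∃ l : ι → ℝ, (∀ i, 0 ≤ l i) ∧ v = ∑ i, l i • a i} := by
  have hrep : {v : H | ∃ l : ι → ℝ, (∀ i, 0 ≤ l i) ∧ v = ∑ i, l i • a i} =
      ⋃ s ∈ {s : Finset ι | LinearIndependent ℝ (fun i : s => a ↑i)},
        {v : H | ∃ l : ι → ℝ, (∀ i, 0 ≤ l i) ∧ (∀ i ∉ s, l i = 0) ∧ v = ∑ i, l i • a i} := by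
    ext v
    constructor
    · rintro ⟨l, hl, rfl⟩
      obtain ⟨l', hl', hsum, hLI⟩ :=
        cone_carath a (Finset.univ.filter fun i => l i ≠ 0).card l le_rfl hl
      refine Set.mem_biUnion hLI ⟨l', hl', fun i hi => ?_, hsum.symm⟩
      by_contra h
      exact hi (Finset.mem_filter.2 ⟨Finset.mem_univ i, h⟩)
    · rintro ⟨_, ⟨s, rfl⟩, _, ⟨hs, rfl⟩, l, hl, _, rfl⟩
      exact ⟨l, hl, rfl⟩
  rw [hrep]
  refine Set.Finite.isClosed_biUnion (Set.toFinite _) ?_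
  intro s hs
  let T : (s → ℝ) →ₗ[ℝ] H :=
    { toFun := fun m => ∑ i : s, m i • a ↑i
      map_add' := by intro x y; simp [add_smul, Finset.sum_add_distrib]
      map_smul' := by intro r x; simp [smul_smul, Finset.smul_sum] }
  have hinj : Function.Injective T := by
    rw [← LinearMap.ker_eq_bot]
    rw [LinearMap.ker_eq_bot']
    intro m hm
    have := (Fintype.linearIndependent_iff.1 hs) m hm
    funext i
    exact this i
  have hemb := LinearMap.isClosedEmbedding_of_injective (LinearMap.ker_eq_bot.2 hinj)
  have himg : {v : H | ∃ l : ι → ℝ, (∀ i, 0 ≤ l i) ∧ (∀ i ∉ s, l i = 0) ∧ v = ∑ i, l i • a i}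
      = T '' {m : s → ℝ | ∀ i, 0 ≤ m i} := by
    ext v
    constructor
    · rintro ⟨l, hl, hl0, rfl⟩
      refine ⟨fun i => l ↑i, fun i => hl ↑i, ?_⟩
      show ∑ i : s, l ↑i • a ↑i = ∑ i, l i • a i
      rw [Finset.sum_coe_sort s (fun i => l i • a i)]
      exact Finset.sum_subset (Finset.subset_univ s)
        (fun i _ hi => by rw [hl0 i hi, zero_smul])
    · rintro ⟨m, hm, rfl⟩
      refine ⟨fun i => if h : i ∈ s then m ⟨i, h⟩ else 0, ?_, ?_, ?_⟩
      · intro i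
        by_cases h : i ∈ s
        · simp only [dif_pos h]; exact hm ⟨i, h⟩
        · simp only [dif_neg h]; exact le_rfl
      · intro i hi; exact dif_neg hi
      · show T m = _
        have h1 : ∑ i ∈ s, (if h : i ∈ s then m ⟨i, h⟩ else 0) • a i
            = ∑ i, (if h : i ∈ s then m ⟨i, h⟩ else 0) • a i :=
          Finset.sum_subset (Finset.subset_univ s)
            (fun i _ hi => by rw [dif_neg hi, zero_smul])
        rw [← h1, ← Finset.sum_coe_sort s (fun i => (if h : i ∈ s then m ⟨i,h⟩ else 0) • a i)]
        exact Finset.sum_congr rfl fun i _ => by rw [dif_pos i.2]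
  rw [himg]
  apply hemb.isClosedMap
  have : {m : s → ℝ | ∀ i, 0 ≤ m i} = ⋂ i, {m : s → ℝ | 0 ≤ m i} := by
    ext m; simp [Set.mem_iInter]
  rw [this]
  exact isClosed_iInter fun i => isClosed_le continuous_const (continuous_apply i)

open scoped RealInnerProductSpace in
/-- Farkas lemma in a finite-dimensional real inner product space. -/
lemma farkas_aux [FiniteDimensional ℝ H] (a : ι → H) (c : H) :
    (∃ l : ι → ℝ, (∀ i, 0 ≤ l i) ∧ c = ∑ i, l i • a i) ∨
    ∃ y : H, (∀ i, ⟪a i, y⟫ ≤ 0) ∧ 0 < ⟪c, y⟫ := by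
  by_cases hc : ∃ l : ι → ℝ, (∀ i, 0 ≤ l i) ∧ c = ∑ i, l i • a i
  · exact Or.inl hc
  right
  haveI : CompleteSpace H := FiniteDimensional.complete ℝ H
  let K : ConvexCone ℝ H :=
    { carrier := {v : H | ∃ l : ι → ℝ, (∀ i, 0 ≤ l i) ∧ v = ∑ i, l i • a i}
      smul_mem' := by
        rintro r hr v ⟨l, hl, rfl⟩
        refine ⟨fun i => r * l i, fun i => mul_nonneg hr.le (hl i), ?_⟩
        rw [Finset.smul_sum]
        exact Finset.sum_congr rfl fun i _ => by rw [mul_smul]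
      add_mem' := by
        rintro v ⟨l, hl, rfl⟩ w ⟨m, hm, rfl⟩
        refine ⟨fun i => l i + m i, fun i => add_nonneg (hl i) (hm i), ?_⟩
        rw [← Finset.sum_add_distrib]
        exact Finset.sum_congr rfl fun i _ => by rw [add_smul] }
  have hKne : (K : Set H).Nonempty := ⟨0, 0, fun _ => le_rfl, by simp⟩
  have hKcl : IsClosed (K : Set H) := cone_closed a
  have hcK : c ∉ K := hc
  obtain ⟨y, hy1, hy2'⟩ :=
    ProperCone.hyperplane_separation' (⟨K.toPointedCone (show (0 : H) ∈ K from
      ⟨fun _ => 0, fun _ => le_rfl, by simp⟩), hKcl⟩ : ProperCone ℝ H) (x₀ := c) (by exact hcK)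
  have hy2 : ⟪y, c⟫ < 0 := by rw [real_inner_comm]; exact hy2'
  refine ⟨-y, fun i => ?_, ?_⟩
  · have hai : a i ∈ K := by
      refine ⟨fun j => if j = i then 1 else 0, fun j => by positivity, ?_⟩
      simp [ite_smul]
    have := hy1 (a i) hai
    rw [inner_neg_right]
    linarith
  · rw [inner_neg_right, real_inner_comm]
    linarith

end Farkas

section FarkasVec

open scoped Classical

variable {ι : Type} [Fintype ι]

/-- Farkas' lemma for `Vec m` with the explicit `dot` product. -/
lemma farkas_vec {m : ℕ} (a : ι → Vec m) (c : Vec m) :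
    (∃ l : ι → ℝ, (∀ i, 0 ≤ l i) ∧ c = ∑ i, l i • a i) ∨
    ∃ y : Vec m, (∀ i, dot (a i) y ≤ 0) ∧ 0 < dot c y := by
  set φ := (PiLp.continuousLinearEquiv 2 ℝ (fun _ : Fin m => ℝ)).symm with hφ
  have hφap : ∀ (u : Vec m) (i : Fin m), φ u i = u i := fun u i => rfl
  have hkey : ∀ u v : Vec m, (inner ℝ (φ u) (φ v) : ℝ) = dot u v := by
    intro u v
    rw [PiLp.inner_apply]
    unfold dot
    exact Finset.sum_congr rfl fun i _ => by
      rw [hφap, hφap, RCLike.inner_apply', starRingEnd_apply, star_trivial]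
  rcases farkas_aux (fun i => φ (a i)) (φ c) with ⟨l, hl, heq⟩ | ⟨y, hy1, hy2⟩
  · left
    refine ⟨l, hl, ?_⟩
    have := congrArg φ.symm heq
    rw [ContinuousLinearEquiv.symm_apply_apply] at this
    rw [this, map_sum]
    exact Finset.sum_congr rfl fun i _ => by rw [map_smul, ContinuousLinearEquiv.symm_apply_apply]
  · right
    refine ⟨φ.symm y, fun i => ?_, ?_⟩
    · have := hy1 i
      rwa [← (φ.apply_symm_apply y), hkey] at this
    · have := hy2
      rwa [← (φ.apply_symm_apply y), hkey] at this

/-- Gale's theorem: an infeasible finite system of linear inequalities admits a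
nonnegative combination certifying infeasibility. -/
lemma gale {m : ℕ} (u : ι → Vec m) (β : ι → ℝ)
    (h : ¬ ∃ x : Vec m, ∀ i, dot (u i) x ≤ β i) :
    ∃ l : ι → ℝ, (∀ i, 0 ≤ l i) ∧ (∑ i, l i • u i = 0) ∧ (∑ i, l i * β i < 0) := by
  set A : ι → Vec (m + 1) := fun i => Fin.snoc (u i) (β i) with hA
  set c : Vec (m + 1) := Fin.snoc (0 : Vec m) (-1 : ℝ) with hc
  have hdot : ∀ (v : Vec m) (γ : ℝ) (y : Vec (m + 1)),
      dot (Fin.snoc v γ : Vec (m + 1)) y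
        = dot v (fun j => y (Fin.castSucc j)) + γ * y (Fin.last m) := by
    intro v γ y
    unfold dot
    rw [Fin.sum_univ_castSucc]
    simp [Fin.snoc_castSucc, Fin.snoc_last]
  rcases farkas_vec A c with ⟨l, hl, heq⟩ | ⟨y, hy1, hy2⟩
  · refine ⟨l, hl, ?_, ?_⟩
    · funext j
      have := congrFun heq (Fin.castSucc j)
      rw [hc] at this
      simp only [Fin.snoc_castSucc] at this
      rw [Finset.sum_apply] at this
      have h2 : ∀ i : ι, (l i • A i) (Fin.castSucc j) = l i * u i j := by
        intro i
        rw [hA]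
        simp [Fin.snoc_castSucc]
      rw [Finset.sum_congr rfl fun i _ => h2 i] at this
      rw [Finset.sum_apply]
      have h3 : ∀ i : ι, (l i • u i) j = l i * u i j := fun i => rfl
      rw [Finset.sum_congr rfl fun i _ => h3 i]
      simp only [Pi.zero_apply, Pi.ofNat_apply]
      rw [← this]
      rfl
    · have := congrFun heq (Fin.last m)
      rw [hc] at this
      simp only [Fin.snoc_last] at this
      rw [Finset.sum_apply] at this
      have h2 : ∀ i : ι, (l i • A i) (Fin.last m) = l i * β i := by
        intro i
        rw [hA]
        simp [Fin.snoc_last]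
      rw [Finset.sum_congr rfl fun i _ => h2 i] at this
      rw [← this]
      norm_num
  · exfalso
    set y₀ : Vec m := fun j => y (Fin.castSucc j) with hy₀
    set ρ : ℝ := y (Fin.last m) with hρ
    have hρneg : ρ < 0 := by
      have := hy2
      rw [hc, hdot] at this
      rw [Dot.zero_left] at this
      linarith
    have hfeas : ∀ i, dot (u i) ((-ρ)⁻¹ • y₀) ≤ β i := by
      intro i
      have := hy1 i
      rw [hA, hdot] at this
      rw [Dot.smul_right]
      have h2 : dot (u i) y₀ ≤ -(β i * ρ) := by linarith
      rw [inv_mul_le_iff₀ (by linarith : (0:ℝ) < -ρ)]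
      nlinarith
    exact h ⟨(-ρ)⁻¹ • y₀, hfeas⟩

end FarkasVec

section Decompose

open scoped Classical

variable {n : ℕ}

/-- Decomposition of a normal vector at a common maximizer of two polytopes. -/
lemma decompose (S T : Finset (Vec n)) (z c : Vec n)
    (hzS : z ∈ convexHull ℝ (S : Set (Vec n))) (hzT : z ∈ convexHull ℝ (T : Set (Vec n)))
    (hmax : ∀ y ∈ convexHull ℝ (S : Set (Vec n)) ∩ convexHull ℝ (T : Set (Vec n)),
      dot c y ≤ dot c z) :
    ∃ a : Vec n, (∀ s ∈ S, dot a s ≤ dot a z) ∧ (∀ t ∈ T, dot (c - a) t ≤ dot (c - a) z) := by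
  set ι := (↥S) ⊕ (↥T) with hι
  set u : ι → Vec n := Sum.elim (fun s => (s : Vec n) - z) (fun t => z - (t : Vec n)) with hu
  set β : ι → ℝ := Sum.elim (fun _ => 0) (fun t => dot c (z - (t : Vec n))) with hβ
  by_cases hfeas : ∃ x : Vec n, ∀ i, dot (u i) x ≤ β i
  · obtain ⟨a, ha⟩ := hfeas
    refine ⟨a, fun s hs => ?_, fun t ht => ?_⟩
    · have := ha (Sum.inl ⟨s, hs⟩)
      simp only [hu, hβ, Sum.elim_inl] at this
      rw [Dot.sub_left] at this
      rw [Dot.comm a s, Dot.comm a z]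
      linarith
    · have := ha (Sum.inr ⟨t, ht⟩)
      simp only [hu, hβ, Sum.elim_inr] at this
      rw [Dot.sub_left, Dot.sub_right] at this
      rw [Dot.sub_left, Dot.sub_left]
      rw [show dot z a = dot a z from Dot.comm z a, show dot t a = dot a t from Dot.comm t a] at this
      linarith
  · exfalso
    obtain ⟨l, hl, hsum, hβsum⟩ := gale u β hfeas
    set lam : ↥S → ℝ := fun s => l (Sum.inl s) with hlam
    set mu : ↥T → ℝ := fun t => l (Sum.inr t) with hmu
    set w : Vec n := ∑ t : ↥T, mu t • ((t : Vec n) - z) with hw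
    have hsum2 : ∑ s : ↥S, lam s • ((s : Vec n) - z) = w := by
      have := hsum
      rw [hu, Fintype.sum_sum_type] at this
      simp only [Sum.elim_inl, Sum.elim_inr] at this
      rw [hw]
      have h2 : ∀ t : ↥T, l (Sum.inr t) • (z - (t : Vec n)) = -(mu t • ((t : Vec n) - z)) := by
        intro t; rw [hmu]; rw [← smul_neg]; congr 1; abel
      rw [Finset.sum_congr rfl fun t _ => h2 t, Finset.sum_neg_distrib] at this
      have h3 : ∀ s : ↥S, l (Sum.inl s) • ((s : Vec n) - z) = lam s • ((s : Vec n) - z) :=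
        fun s => rfl
      rw [Finset.sum_congr rfl fun s _ => h3 s] at this
      linear_combination (norm := module) this
    have hcw : 0 < dot c w := by
      have := hβsum
      rw [hβ, Fintype.sum_sum_type] at this
      simp only [Sum.elim_inl, Sum.elim_inr, mul_zero, Finset.sum_const_zero, zero_add] at this
      have h2 : dot c w = -∑ t : ↥T, l (Sum.inr t) * dot c (z - (t : Vec n)) := by
        rw [hw, Dot.sum_right, ← Finset.sum_neg_distrib]
        refine Finset.sum_congr rfl fun t _ => ?_
        rw [hmu, Dot.smul_right, ← mul_neg]
        congr 1
        rw [Dot.sub_right, Dot.sub_right]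
        ring
      rw [h2]
      linarith
    set Λ := ∑ s : ↥S, lam s with hΛ
    set Mu := ∑ t : ↥T, mu t with hMu
    have hΛ0 : 0 ≤ Λ := Finset.sum_nonneg fun s _ => hl (Sum.inl s)
    have hMu0 : 0 ≤ Mu := Finset.sum_nonneg fun t _ => hl (Sum.inr t)
    have hΛpos : 0 < Λ := by
      rcases hΛ0.lt_or_eq with h | h
      · exact h
      · exfalso
        have hz : ∀ s : ↥S, lam s = 0 := by
          have := (Finset.sum_eq_zero_iff_of_nonneg (fun s _ => hl (Sum.inl s))).1 h.symm
          exact fun s => this s (Finset.mem_univ s)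
        have : w = 0 := by
          rw [← hsum2]
          exact Finset.sum_eq_zero fun s _ => by rw [hz s, zero_smul]
        rw [this, Dot.zero_right] at hcw
        exact lt_irrefl 0 hcw
    have hMupos : 0 < Mu := by
      rcases hMu0.lt_or_eq with h | h
      · exact h
      · exfalso
        have hz : ∀ t : ↥T, mu t = 0 := by
          have := (Finset.sum_eq_zero_iff_of_nonneg (fun t _ => hl (Sum.inr t))).1 h.symm
          exact fun t => this t (Finset.mem_univ t)
        have : w = 0 := by
          rw [hw]
          exact Finset.sum_eq_zero fun t _ => by rw [hz t, zero_smul]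
        rw [this, Dot.zero_right] at hcw
        exact lt_irrefl 0 hcw
    -- the point z + ε • w improves dot c, contradiction
    set ε := min Λ⁻¹ Mu⁻¹ with hε
    have hεpos : 0 < ε := lt_min (inv_pos.2 hΛpos) (inv_pos.2 hMupos)
    have hεΛ : ε * Λ ≤ 1 := by
      have : ε ≤ Λ⁻¹ := min_le_left _ _
      rw [← inv_mul_cancel₀ (ne_of_gt hΛpos)]
      exact mul_le_mul_of_nonneg_right this hΛ0
    have hεMu : ε * Mu ≤ 1 := by
      have : ε ≤ Mu⁻¹ := min_le_right _ _
      rw [← inv_mul_cancel₀ (ne_of_gt hMupos)]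
      exact mul_le_mul_of_nonneg_right this hMu0
    have hmemS : z + ε • w ∈ convexHull ℝ (S : Set (Vec n)) := by
      set q : Vec n := Λ⁻¹ • ∑ s : ↥S, lam s • (s : Vec n) with hq
      have hqmem : q ∈ convexHull ℝ (S : Set (Vec n)) := by
        apply mem_convexHull_of_exists_fintype (fun s : ↥S => Λ⁻¹ * lam s) (fun s => (s : Vec n))
        · intro s; exact mul_nonneg (inv_nonneg.2 hΛ0) (hl (Sum.inl s))
        · rw [← Finset.mul_sum, ← hΛ, inv_mul_cancel₀ (ne_of_gt hΛpos)]
        · intro s; exact Finset.mem_coe.2 s.2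
        · rw [hq, Finset.smul_sum]
          exact Finset.sum_congr rfl fun s _ => by rw [smul_smul]
      have hcomb := (convex_convexHull ℝ (S : Set (Vec n))) hzS hqmem
        (by linarith : (0:ℝ) ≤ 1 - ε * Λ) (by positivity : (0:ℝ) ≤ ε * Λ) (by ring)
      have heq : (1 - ε * Λ) • z + (ε * Λ) • q = z + ε • w := by
        have hw2 : w = (∑ s : ↥S, lam s • (s : Vec n)) - Λ • z := by
          rw [← hsum2, hΛ, Finset.sum_smul, ← Finset.sum_sub_distrib]
          exact Finset.sum_congr rfl fun s _ => (smul_sub _ _ _)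
        rw [hq, smul_smul, mul_assoc, mul_inv_cancel₀ (ne_of_gt hΛpos), mul_one, hw2]
        module
      rwa [heq] at hcomb
    have hmemT : z + ε • w ∈ convexHull ℝ (T : Set (Vec n)) := by
      set q : Vec n := Mu⁻¹ • ∑ t : ↥T, mu t • (t : Vec n) with hq
      have hqmem : q ∈ convexHull ℝ (T : Set (Vec n)) := by
        apply mem_convexHull_of_exists_fintype (fun t : ↥T => Mu⁻¹ * mu t) (fun t => (t : Vec n))
        · intro t; exact mul_nonneg (inv_nonneg.2 hMu0) (hl (Sum.inr t))
        · rw [← Finset.mul_sum, ← hMu, inv_mul_cancel₀ (ne_of_gt hMupos)]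
        · intro t; exact Finset.mem_coe.2 t.2
        · rw [hq, Finset.smul_sum]
          exact Finset.sum_congr rfl fun t _ => by rw [smul_smul]
      have hcomb := (convex_convexHull ℝ (T : Set (Vec n))) hzT hqmem
        (by linarith : (0:ℝ) ≤ 1 - ε * Mu) (by positivity : (0:ℝ) ≤ ε * Mu) (by ring)
      have heq : (1 - ε * Mu) • z + (ε * Mu) • q = z + ε • w := by
        have hw2 : w = (∑ t : ↥T, mu t • (t : Vec n)) - Mu • z := by
          rw [hw, hMu, Finset.sum_smul, ← Finset.sum_sub_distrib]
          exact Finset.sum_congr rfl fun t _ => (smul_sub _ _ _)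
        rw [hq, smul_smul, mul_assoc, mul_inv_cancel₀ (ne_of_gt hMupos), mul_one, hw2]
        module
      rwa [heq] at hcomb
    have hfinal := hmax (z + ε • w) ⟨hmemS, hmemT⟩
    rw [Dot.add_right, Dot.smul_right] at hfinal
    nlinarith

end Decompose

section Assemble

variable {n : ℕ}

lemma mem_of_smaller {A : Set (Vec n)} (hA : Convex ℝ A) {z x : Vec n} {ε₁ ε : ℝ}
    (hz : z ∈ A) (h1 : z + ε₁ • (z - x) ∈ A) (hε : 0 < ε) (hle : ε ≤ ε₁) :
    z + ε • (z - x) ∈ A := by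
  have hε₁ : 0 < ε₁ := lt_of_lt_of_le hε hle
  have key : z + ε • (z - x) = (1 - ε / ε₁) • z + (ε / ε₁) • (z + ε₁ • (z - x)) := by
    have h2 : (ε / ε₁) * ε₁ = ε := div_mul_cancel₀ ε (ne_of_gt hε₁)
    rw [smul_add, smul_smul, h2]
    module
  rw [key]
  exact hA hz h1 (by rw [sub_nonneg]; exact (div_le_one hε₁).2 hle)
    (le_of_lt (div_pos hε hε₁)) (by ring)

lemma face_subset_face {P F F₂ : Set (Vec n)} (hF₂ : IsFace P F₂) {m : Vec n}
    (hm1 : m ∈ intrinsicInterior ℝ F) (hm2 : m ∈ F₂) (hFP : F ⊆ P) : F ⊆ F₂ := by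
  obtain ⟨c', rfl⟩ := hF₂
  intro x hx
  refine ⟨hFP hx, fun y hy => ?_⟩
  have heq := dot_eq_of_relint hm1 hx hFP hm2.2
  rw [heq]
  exact hm2.2 y hy

theorem stmt3' {n : ℕ} (P Q : Set (Vec n))
    (hP : IsPolytope P) (hQ : IsPolytope Q) (hne : (P ∩ Q).Nonempty) :
    (∀ F G : Set (Vec n), IsFace P F → IsFace Q G →
      (intrinsicInterior ℝ F ∩ intrinsicInterior ℝ G).Nonempty →
      (F ∩ G).Nonempty ∧ IsFace (P ∩ Q) (F ∩ G) ∧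
        normalCone (P ∩ Q) (F ∩ G) = coneOf (normalCone P F ∪ normalCone Q G)) ∧
    (∀ F G F' G' : Set (Vec n), IsFace P F → IsFace Q G → IsFace P F' → IsFace Q G' →
      (intrinsicInterior ℝ F ∩ intrinsicInterior ℝ G).Nonempty →
      (intrinsicInterior ℝ F' ∩ intrinsicInterior ℝ G').Nonempty →
      F ∩ G = F' ∩ G' → F = F' ∧ G = G') ∧
    (∀ E : Set (Vec n), IsFace (P ∩ Q) E → E.Nonempty →
      ∃ F G : Set (Vec n), IsFace P F ∧ IsFace Q G ∧
        (intrinsicInterior ℝ F ∩ intrinsicInterior ℝ G).Nonempty ∧ E = F ∩ G) := by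
  refine ⟨?_, ?_, ?_⟩
  · -- Part 1
    intro F G hF hG hri
    obtain ⟨z, hzF, hzG⟩ := hri
    have hzF' : z ∈ F := intrinsicInterior_subset hzF
    have hzG' : z ∈ G := intrinsicInterior_subset hzG
    have hne2 : (F ∩ G).Nonempty := ⟨z, hzF', hzG'⟩
    refine ⟨hne2, ?_, ?_⟩
    · obtain ⟨cc, hcc⟩ := face_inter hF hG hne2
      exact ⟨cc, hcc⟩
    · obtain ⟨S, hPS⟩ := hP
      obtain ⟨T, hQT⟩ := hQ
      apply Set.Subset.antisymm
      · intro c hc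
        have hzPQ : z ∈ P ∩ Q := ⟨hF.subset hzF', hG.subset hzG'⟩
        have hmax : ∀ y ∈ P ∩ Q, dot c y ≤ dot c z := (hc ⟨hzF', hzG'⟩).2
        have hzS : z ∈ convexHull ℝ (S : Set (Vec n)) := hPS ▸ hzPQ.1
        have hzT : z ∈ convexHull ℝ (T : Set (Vec n)) := hQT ▸ hzPQ.2
        have hmax' : ∀ y ∈ convexHull ℝ (S : Set (Vec n)) ∩ convexHull ℝ (T : Set (Vec n)),
            dot c y ≤ dot c z := by rw [← hPS, ← hQT]; exact hmax
        obtain ⟨a, haS, haT⟩ := decompose S T z c hzS hzT hmax'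
        have hamax : ∀ y ∈ P, dot a y ≤ dot a z := by
          rw [hPS]; exact dot_le_on_hull haS
        have hbmax : ∀ y ∈ Q, dot (c - a) y ≤ dot (c - a) z := by
          rw [hQT]; exact dot_le_on_hull haT
        have haN : a ∈ normalCone P F := by
          intro x hx
          refine ⟨hF.subset hx, fun y hy => ?_⟩
          rw [dot_eq_of_relint hzF hx hF.subset hamax]
          exact hamax y hy
        have hbN : (c - a) ∈ normalCone Q G := by
          intro x hx
          refine ⟨hG.subset hx, fun y hy => ?_⟩
          rw [dot_eq_of_relint hzG hx hG.subset hbmax]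
          exact hbmax y hy
        refine ⟨2, ![a, c - a], ![1, 1], ?_, ?_, ?_⟩
        · intro i
          fin_cases i
          · exact Or.inl haN
          · exact Or.inr hbN
        · intro i; fin_cases i <;> norm_num
        · rw [Fin.sum_univ_two]
          simp only [Matrix.cons_val_zero, Matrix.cons_val_one, Matrix.head_cons, one_smul]
          abel
      · rintro c ⟨k, xs, l, hxs, hl, rfl⟩
        intro w hw
        refine ⟨⟨hF.subset hw.1, hG.subset hw.2⟩, fun y hy => ?_⟩
        rw [Dot.sum_left, Dot.sum_left]
        refine Finset.sum_le_sum fun i _ => ?_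
        rw [Dot.smul_left, Dot.smul_left]
        refine mul_le_mul_of_nonneg_left ?_ (hl i)
        rcases hxs i with h | h
        · exact (h hw.1).2 y hy.1
        · exact (h hw.2).2 y hy.2
  · -- Part 2
    intro F G F' G' hF hG hF' hG' h1 h2 hEq
    obtain ⟨z, hzF, hzG⟩ := h1
    obtain ⟨z', hzF', hzG'⟩ := h2
    have hzFG : z ∈ F ∩ G := ⟨intrinsicInterior_subset hzF, intrinsicInterior_subset hzG⟩
    have hz'F'G' : z' ∈ F' ∩ G' :=
      ⟨intrinsicInterior_subset hzF', intrinsicInterior_subset hzG'⟩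
    have hz'FG : z' ∈ F ∩ G := by rw [hEq]; exact hz'F'G'
    have hzF'G' : z ∈ F' ∩ G' := by rw [← hEq]; exact hzFG
    have hmF : (1/2 : ℝ) • (z + z') ∈ intrinsicInterior ℝ F :=
      midpoint_mem_relint (hF.convex hP.convex) hzF hz'FG.1
    have hmG : (1/2 : ℝ) • (z + z') ∈ intrinsicInterior ℝ G :=
      midpoint_mem_relint (hG.convex hQ.convex) hzG hz'FG.2
    have hmF' : (1/2 : ℝ) • (z + z') ∈ intrinsicInterior ℝ F' := by
      have := midpoint_mem_relint (hF'.convex hP.convex) hzF' hzF'G'.1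
      rwa [add_comm z' z] at this
    have hmG' : (1/2 : ℝ) • (z + z') ∈ intrinsicInterior ℝ G' := by
      have := midpoint_mem_relint (hG'.convex hQ.convex) hzG' hzF'G'.2
      rwa [add_comm z' z] at this
    constructor
    · exact Set.Subset.antisymm
        (face_subset_face hF' hmF (intrinsicInterior_subset hmF') hF.subset)
        (face_subset_face hF hmF' (intrinsicInterior_subset hmF) hF'.subset)
    · exact Set.Subset.antisymm
        (face_subset_face hG' hmG (intrinsicInterior_subset hmG') hG.subset)
        (face_subset_face hG hmG' (intrinsicInterior_subset hmG) hG'.subset)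
  · -- Part 3
    intro E hE hEne
    have hEconv : Convex ℝ E := hE.convex (hP.convex.inter hQ.convex)
    obtain ⟨z, hz⟩ := Set.Nonempty.intrinsicInterior hEconv hEne
    have hzE : z ∈ E := intrinsicInterior_subset hz
    have hzPQ : z ∈ P ∩ Q := hE.subset hzE
    obtain ⟨S, hPS⟩ := hP
    obtain ⟨T, hQT⟩ := hQ
    have hzS : z ∈ convexHull ℝ (S : Set (Vec n)) := hPS ▸ hzPQ.1
    have hzT : z ∈ convexHull ℝ (T : Set (Vec n)) := hQT ▸ hzPQ.2
    obtain ⟨F, hFf0, hzF⟩ := exists_face_relint hzS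
    obtain ⟨G, hGf0, hzG⟩ := exists_face_relint hzT
    rw [← hPS] at hFf0
    rw [← hQT] at hGf0
    have hzFmem : z ∈ F := intrinsicInterior_subset hzF
    have hzGmem : z ∈ G := intrinsicInterior_subset hzG
    refine ⟨F, G, hFf0, hGf0, ⟨z, hzF, hzG⟩, ?_⟩
    have hneFG : (F ∩ G).Nonempty := ⟨z, hzFmem, hzGmem⟩
    obtain ⟨cc, hcc⟩ := face_inter hFf0 hGf0 hneFG
    obtain ⟨e, hEeq⟩ := hE
    have hEsub : E ⊆ P ∩ Q := by rw [hEeq]; exact Set.sep_subset _ _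
    have hmaxE : ∀ y ∈ P ∩ Q, dot e y ≤ dot e z := by
      have h := hzE
      rw [hEeq] at h
      exact h.2
    have hmaxcc : ∀ y ∈ P ∩ Q, dot cc y ≤ dot cc z := by
      have h : z ∈ F ∩ G := ⟨hzFmem, hzGmem⟩
      rw [hcc] at h
      exact h.2
    apply Set.Subset.antisymm
    · intro x hx
      have heq := dot_eq_of_relint hz hx hEsub hmaxcc
      rw [hcc]
      exact ⟨hEsub hx, fun y hy => by rw [heq]; exact hmaxcc y hy⟩
    · intro x hx
      have hxPQ : x ∈ P ∩ Q := ⟨hFf0.subset hx.1, hGf0.subset hx.2⟩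
      obtain ⟨ε₁, hε₁, hmem1⟩ := exists_extension hzF hx.1
      obtain ⟨ε₂, hε₂, hmem2⟩ := exists_extension hzG hx.2
      have hεpos : 0 < min ε₁ ε₂ := lt_min hε₁ hε₂
      have hP1 : z + min ε₁ ε₂ • (z - x) ∈ P :=
        mem_of_smaller (hPS ▸ convex_convexHull ℝ (S : Set (Vec n))) hzPQ.1
          (hFf0.subset hmem1) hεpos (min_le_left _ _)
      have hQ1 : z + min ε₁ ε₂ • (z - x) ∈ Q :=
        mem_of_smaller (hQT ▸ convex_convexHull ℝ (T : Set (Vec n))) hzPQ.2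
          (hGf0.subset hmem2) hεpos (min_le_right _ _)
      have hkey := hmaxE _ ⟨hP1, hQ1⟩
      rw [Dot.add_right, Dot.smul_right, Dot.sub_right] at hkey
      have hxe : dot e x ≤ dot e z := hmaxE x hxPQ
      have heq : dot e x = dot e z := by nlinarith
      rw [hEeq]
      exact ⟨hxPQ, fun y hy => by rw [heq]; exact hmaxE y hy⟩

end Assemble


/-- For polytopes `P, Q ⊆ ℝⁿ` with `P ∩ Q` nonempty, the map
`(F, G) ↦ F ∩ G` is a bijection from the pairs of nonempty faces with intersecting relative
interiors onto the nonempty faces of the polytope `P ∩ Q`, and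
`N_{P∩Q}(F ∩ G) = cone(N_P(F) ∪ N_Q(G))`. -/
theorem stmt3 {n : ℕ} (P Q : Set (Vec n))
    (hP : IsPolytope P) (hQ : IsPolytope Q) (hne : (P ∩ Q).Nonempty) :
    (∀ F G : Set (Vec n), IsFace P F → IsFace Q G →
      (intrinsicInterior ℝ F ∩ intrinsicInterior ℝ G).Nonempty →
      (F ∩ G).Nonempty ∧ IsFace (P ∩ Q) (F ∩ G) ∧
        normalCone (P ∩ Q) (F ∩ G) = coneOf (normalCone P F ∪ normalCone Q G)) ∧
    (∀ F G F' G' : Set (Vec n), IsFace P F → IsFace Q G → IsFace P F' → IsFace Q G' →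
      (intrinsicInterior ℝ F ∩ intrinsicInterior ℝ G).Nonempty →
      (intrinsicInterior ℝ F' ∩ intrinsicInterior ℝ G').Nonempty →
      F ∩ G = F' ∩ G' → F = F' ∧ G = G') ∧
    (∀ E : Set (Vec n), IsFace (P ∩ Q) E → E.Nonempty →
      ∃ F G : Set (Vec n), IsFace P F ∧ IsFace Q G ∧
        (intrinsicInterior ℝ F ∩ intrinsicInterior ℝ G).Nonempty ∧ E = F ∩ G) := by
  exact stmt3' P Q hP hQ hne
end
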